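/- Let b ∈ (0, 1] and V(t) = b·sin(t³) + t². Then V(t) > 0 for all t ≥ 1, the function φ(t) := V(t)^{−1/4}·(d²/dt²)(V(t)^{−1/4}) satisfies φ(t) = (9/4)·b·t·sin(t³) + O(t^{−1}) as t → ∞ (i.e., there is a constant C with |φ(t) − (9/4)·b·t·sin(t³)| ≤ C·t^{−1} for all t ≥ 1), and φ is not Lebesgue integrable on [1, ∞). -/

import Mathlib

open Set MeasureTheory
set_option maxHeartbeats 1000000

lemma hVd (b t : ℝ) : HasDerivAt (fun u : ℝ => b * Real.sin (u ^ 3) + u ^ 2)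
    (b * (Real.cos (t ^ 3) * (3 * t ^ 2)) + 2 * t) t := by
  have h1 : HasDerivAt (fun u : ℝ => u ^ 3) (3 * t ^ 2) t := by
    simpa using hasDerivAt_pow 3 t
  have h2 : HasDerivAt (fun u : ℝ => u ^ 2) (2 * t) t := by
    simpa using hasDerivAt_pow 2 t
  exact (h1.sin.const_mul b).add h2

lemma hV1d (b t : ℝ) : HasDerivAt (fun u : ℝ => (b * (Real.cos (u ^ 3) * (3 * u ^ 2)) + 2 * u) * (-(1:ℝ)/4))
    ((b * (-Real.sin (t ^ 3) * (3 * t ^ 2) * (3 * t ^ 2) + Real.cos (t ^ 3) * (6 * t)) + 2) * (-(1:ℝ)/4)) t := by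
  have h1 : HasDerivAt (fun u : ℝ => u ^ 3) (3 * t ^ 2) t := by
    simpa using hasDerivAt_pow 3 t
  have h2 : HasDerivAt (fun u : ℝ => 3 * u ^ 2) (6 * t) t := by
    exact ((hasDerivAt_pow 2 t).const_mul (3:ℝ)).congr_deriv (by push_cast; ring)
  have h3 : HasDerivAt (fun u : ℝ => Real.cos (u ^ 3) * (3 * u ^ 2))
      (-Real.sin (t ^ 3) * (3 * t ^ 2) * (3 * t ^ 2) + Real.cos (t ^ 3) * (6 * t)) t :=
    h1.cos.mul h2
  exact (((h3.const_mul b).add ((hasDerivAt_id t).const_mul 2)).mul_const _).congr_deriv (by ring)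

lemma t2gt (t : ℝ) (hpi : Real.pi < t ^ 3) : 2 < t ^ 2 := by
  have h3 : (3:ℝ) < t ^ 3 := lt_trans Real.pi_gt_three hpi
  nlinarith [sq_nonneg (t - 3/2), sq_nonneg t]

lemma Vpos (b t : ℝ) (hb0 : 0 < b) (hb1 : b ≤ 1) (ht : (9:ℝ)/10 < t) :
    0 < b * Real.sin (t ^ 3) + t ^ 2 := by
  rcases le_or_gt (t ^ 3) Real.pi with h | h
  · have hs : 0 ≤ Real.sin (t ^ 3) := Real.sin_nonneg_of_nonneg_of_le_pi (by positivity) h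
    nlinarith
  · have h2 := t2gt t h
    have hs : -1 ≤ Real.sin (t ^ 3) := Real.neg_one_le_sin _
    nlinarith

lemma deriv2_eq (b t : ℝ) (hb0 : 0 < b) (hb1 : b ≤ 1) (ht : (9:ℝ)/10 < t) :
    deriv (deriv fun s : ℝ => (b * Real.sin (s ^ 3) + s ^ 2) ^ (-(1:ℝ)/4)) t =
      (b * (Real.cos (t ^ 3) * (3 * t ^ 2)) + 2 * t) ^ 2 * (5/16) *
        (b * Real.sin (t ^ 3) + t ^ 2) ^ (-(9:ℝ)/4)
      + (b * (-Real.sin (t ^ 3) * (3 * t ^ 2) * (3 * t ^ 2) + Real.cos (t ^ 3) * (6 * t)) + 2) *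
        (-(1:ℝ)/4) * (b * Real.sin (t ^ 3) + t ^ 2) ^ (-(5:ℝ)/4) := by
  set g : ℝ → ℝ := fun u => (b * (Real.cos (u ^ 3) * (3 * u ^ 2)) + 2 * u) * (-(1:ℝ)/4) *
      (b * Real.sin (u ^ 3) + u ^ 2) ^ (-(1:ℝ)/4 - 1) with hg_def
  have hfg : ∀ s ∈ Ioi ((9:ℝ)/10),
      deriv (fun u : ℝ => (b * Real.sin (u ^ 3) + u ^ 2) ^ (-(1:ℝ)/4)) s = g s := by
    intro s hs
    exact ((hVd b s).rpow_const (Or.inl (Vpos b s hb0 hb1 hs).ne')).deriv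
  have hev : (deriv fun u : ℝ => (b * Real.sin (u ^ 3) + u ^ 2) ^ (-(1:ℝ)/4)) =ᶠ[nhds t] g :=
    Filter.eventuallyEq_of_mem (isOpen_Ioi.mem_nhds ht) hfg
  rw [hev.deriv_eq]
  have hB : HasDerivAt (fun u : ℝ => (b * Real.sin (u ^ 3) + u ^ 2) ^ (-(1:ℝ)/4 - 1))
      ((b * (Real.cos (t ^ 3) * (3 * t ^ 2)) + 2 * t) * (-(1:ℝ)/4 - 1) *
        (b * Real.sin (t ^ 3) + t ^ 2) ^ (-(1:ℝ)/4 - 1 - 1)) t :=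
    (hVd b t).rpow_const (Or.inl (Vpos b t hb0 hb1 ht).ne')
  have hg : HasDerivAt g
      ((b * (-Real.sin (t ^ 3) * (3 * t ^ 2) * (3 * t ^ 2) + Real.cos (t ^ 3) * (6 * t)) + 2) *
          (-(1:ℝ)/4) * ((b * Real.sin (t ^ 3) + t ^ 2) ^ (-(1:ℝ)/4 - 1))
        + ((b * (Real.cos (t ^ 3) * (3 * t ^ 2)) + 2 * t) * (-(1:ℝ)/4)) *
          ((b * (Real.cos (t ^ 3) * (3 * t ^ 2)) + 2 * t) * (-(1:ℝ)/4 - 1) *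
            (b * Real.sin (t ^ 3) + t ^ 2) ^ (-(1:ℝ)/4 - 1 - 1))) t :=
    (hV1d b t).mul hB
  rw [hg.deriv]
  rw [show (-(1:ℝ)/4 - 1 - 1) = -(9:ℝ)/4 by norm_num, show (-(1:ℝ)/4 - 1) = -(5:ℝ)/4 by norm_num]
  ring

lemma Vlb (b t : ℝ) (hb0 : 0 < b) (hb1 : b ≤ 1) (ht : 1 ≤ t) :
    t ^ 2 / 2 ≤ b * Real.sin (t ^ 3) + t ^ 2 := by
  rcases le_or_gt (t ^ 3) Real.pi with h | h
  · have hs : 0 ≤ Real.sin (t ^ 3) := Real.sin_nonneg_of_nonneg_of_le_pi (by positivity) h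
    nlinarith
  · have h2 := t2gt t h
    have hs : -1 ≤ Real.sin (t ^ 3) := Real.neg_one_le_sin _
    nlinarith

lemma Vub (b t : ℝ) (hb0 : 0 < b) (hb1 : b ≤ 1) (ht : 1 ≤ t) :
    b * Real.sin (t ^ 3) + t ^ 2 ≤ 2 * t ^ 2 := by
  have hs : Real.sin (t ^ 3) ≤ 1 := Real.sin_le_one _
  nlinarith


lemma rpow_to_sqrt (x : ℝ) (hx : 0 < x) (n : ℕ) :
    x ^ (-(n:ℝ)/2) = (Real.sqrt x ^ n)⁻¹ := by
  have h : -(n:ℝ)/2 = -((1/2) * n) := by ring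
  rw [h, Real.rpow_neg hx.le, Real.sqrt_eq_rpow, ← Real.rpow_natCast (x ^ ((1:ℝ)/2)) n,
    ← Real.rpow_mul hx.le]

lemma divbound (x y t c d : ℝ) (ht : 0 < t) (hd : 0 < d) (hdy : d ≤ y)
    (h : |x| * t ≤ c * d) : |x / y| ≤ c * t⁻¹ := by
  have hy : 0 < y := lt_of_lt_of_le hd hdy
  have hc : 0 ≤ c := by nlinarith [abs_nonneg x]
  rw [abs_div, abs_of_pos hy]
  calc |x| / y ≤ |x| / d := by
        apply div_le_div_of_nonneg_left (abs_nonneg x) hd hdy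
    _ ≤ c * t⁻¹ := by
        rw [div_le_iff₀ hd]
        rw [← le_div_iff₀ ht] at h
        calc |x| ≤ c * d / t := h
          _ = c * t⁻¹ * d := by ring


lemma est_core (b t s c w : ℝ) (hb0 : 0 < b) (hb1 : b ≤ 1) (ht : 1 ≤ t)
    (hsl : -1 ≤ s) (hsu : s ≤ 1) (hcl : -1 ≤ c) (hcu : c ≤ 1)
    (hwpos : 0 < w) (hw2 : w ^ 2 = b * s + t ^ 2)
    (hwl : 7/10 * t ≤ w) (hwu : w ≤ 3/2 * t) :
    |((5/16) * (b * (c * (3 * t ^ 2)) + 2 * t) ^ 2) / w ^ 5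
      + (-((6 * b * t * c + 2) / 4)) / w ^ 3
      + ((9/4) * b * t * s * (t ^ 3 - w ^ 3)) / w ^ 3| ≤ 100 * t⁻¹ := by
  have ht0 : (0:ℝ) < t := by linarith
  have hiv : (0:ℝ) ≤ t⁻¹ := by positivity
  have hw3 : t ^ 3 / 3 ≤ w ^ 3 := by
    have h := pow_le_pow_left₀ (by positivity : (0:ℝ) ≤ 7/10 * t) hwl 3
    have h' : (7/10 * t) ^ 3 = 343/1000 * t ^ 3 := by ring
    linarith [pow_pos ht0 3]
  have hw5 : t ^ 5 / 6 ≤ w ^ 5 := by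
    have h := pow_le_pow_left₀ (by positivity : (0:ℝ) ≤ 7/10 * t) hwl 5
    have h' : (7/10 * t) ^ 5 = 16807/100000 * t ^ 5 := by ring
    linarith [pow_pos ht0 5]
  have hbc : b * c ≤ 1 := by nlinarith
  have hbc2 : -1 ≤ b * c := by nlinarith
  have hbc3 : (b * c) ^ 2 ≤ 1 := by nlinarith
  have hA : (b * (c * (3 * t ^ 2)) + 2 * t) ^ 2 ≤ 25 * t ^ 4 := by
    nlinarith [pow_pos ht0 3, pow_pos ht0 4, sq_nonneg t,
      mul_le_mul_of_nonneg_right hbc (le_of_lt (pow_pos ht0 3)),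
      mul_le_mul_of_nonneg_right hbc3 (le_of_lt (pow_pos ht0 4)),
      mul_le_mul_of_nonneg_right (neg_le_iff_add_nonneg.mp hbc2) (le_of_lt (pow_pos ht0 3))]
  have e1 : |((5/16) * (b * (c * (3 * t ^ 2)) + 2 * t) ^ 2) / w ^ 5| ≤ 48 * t⁻¹ := by
    apply divbound _ _ t 48 (t ^ 5 / 6) ht0 (by positivity) hw5
    rw [abs_of_nonneg (by positivity)]
    nlinarith [pow_pos ht0 5]
  have e2 : |(-((6 * b * t * c + 2) / 4)) / w ^ 3| ≤ 6 * t⁻¹ := by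
    apply divbound _ _ t 6 (t ^ 3 / 3) ht0 (by positivity) hw3
    have habs : |(-((6 * b * t * c + 2) / 4))| ≤ 2 * t := by
      rw [abs_le]
      constructor <;> nlinarith [mul_le_mul_of_nonneg_left hbc ht0.le,
        mul_le_mul_of_nonneg_left hbc2 ht0.le]
    nlinarith [mul_le_mul_of_nonneg_right habs ht0.le, pow_pos ht0 3, sq_nonneg (t - 1),
      mul_pos ht0 ht0]
  have hdiff : |t ^ 3 - w ^ 3| ≤ 19/4 * t := by
    have hfac : t ^ 3 - w ^ 3 = (t - w) * (t ^ 2 + t * w + w ^ 2) := by ring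
    have hsq : t ^ 2 - w ^ 2 = -(b * s) := by rw [hw2]; ring
    have h1 : |t - w| * (t + w) ≤ 1 := by
      have hm : |t - w| * (t + w) = |t ^ 2 - w ^ 2| := by
        rw [← abs_of_pos (by positivity : (0:ℝ) < t + w), ← abs_mul]
        ring_nf
      rw [hm, hsq, abs_neg, abs_mul, abs_of_pos hb0]
      have : |s| ≤ 1 := abs_le.mpr ⟨hsl, hsu⟩
      nlinarith [abs_nonneg s]
    have h2 : |t - w| * t ≤ 1 := by
      calc |t - w| * t ≤ |t - w| * (t + w) := by
            apply mul_le_mul_of_nonneg_left (by linarith [hwpos.le]) (abs_nonneg _)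
        _ ≤ 1 := h1
    have h3 : t ^ 2 + t * w + w ^ 2 ≤ 19/4 * t ^ 2 := by
      nlinarith [mul_le_mul_of_nonneg_left hwu ht0.le,
        mul_le_mul_of_nonneg_right hwu hwpos.le, mul_pos ht0 hwpos]
    calc |t ^ 3 - w ^ 3| = |t - w| * (t ^ 2 + t * w + w ^ 2) := by
          rw [hfac, abs_mul, abs_of_nonneg
            (by nlinarith [mul_pos ht0 hwpos] : (0:ℝ) ≤ t ^ 2 + t * w + w ^ 2)]
      _ ≤ 19/4 * t := by
          nlinarith [mul_le_mul_of_nonneg_right h2 (by positivity : (0:ℝ) ≤ 19/4 * t),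
            abs_nonneg (t - w), mul_le_mul_of_nonneg_left h3 (abs_nonneg (t - w))]
  have e3 : |((9/4) * b * t * s * (t ^ 3 - w ^ 3)) / w ^ 3| ≤ 34 * t⁻¹ := by
    apply divbound _ _ t 34 (t ^ 3 / 3) ht0 (by positivity) hw3
    have h9 : |(9/4) * b * t * s| ≤ 9/4 * t := by
      rw [abs_le]
      constructor <;> nlinarith [mul_le_mul_of_nonneg_left hsu (by positivity : (0:ℝ) ≤ b * t),
        mul_le_mul_of_nonneg_left hsl (by positivity : (0:ℝ) ≤ b * t),
        mul_le_mul_of_nonneg_right hb1 ht0.le]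
    have hnum : |(9/4) * b * t * s * (t ^ 3 - w ^ 3)| ≤ (9/4 * t) * (19/4 * t) := by
      rw [abs_mul]
      exact mul_le_mul h9 hdiff (abs_nonneg _) (by positivity)
    nlinarith [mul_le_mul_of_nonneg_right hnum ht0.le, pow_pos ht0 3]
  calc |((5/16) * (b * (c * (3 * t ^ 2)) + 2 * t) ^ 2) / w ^ 5
        + (-((6 * b * t * c + 2) / 4)) / w ^ 3
        + ((9/4) * b * t * s * (t ^ 3 - w ^ 3)) / w ^ 3|
      ≤ |((5/16) * (b * (c * (3 * t ^ 2)) + 2 * t) ^ 2) / w ^ 5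
        + (-((6 * b * t * c + 2) / 4)) / w ^ 3|
        + |((9/4) * b * t * s * (t ^ 3 - w ^ 3)) / w ^ 3| := abs_add_le _ _
    _ ≤ |((5/16) * (b * (c * (3 * t ^ 2)) + 2 * t) ^ 2) / w ^ 5|
        + |(-((6 * b * t * c + 2) / 4)) / w ^ 3|
        + |((9/4) * b * t * s * (t ^ 3 - w ^ 3)) / w ^ 3| := by
          linarith [abs_add_le (((5/16) * (b * (c * (3 * t ^ 2)) + 2 * t) ^ 2) / w ^ 5)
            ((-((6 * b * t * c + 2) / 4)) / w ^ 3)]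
    _ ≤ 100 * t⁻¹ := by linarith

lemma est (b t : ℝ) (hb0 : 0 < b) (hb1 : b ≤ 1) (ht : 1 ≤ t) :
    |(b * Real.sin (t ^ 3) + t ^ 2) ^ (-(1 : ℝ)/4) *
        deriv (deriv fun s : ℝ =>
          (b * Real.sin (s ^ 3) + s ^ 2) ^ (-(1 : ℝ)/4)) t -
      (9/4) * b * t * Real.sin (t ^ 3)| ≤ 100 * t⁻¹ := by
  have ht0 : (0:ℝ) < t := by linarith
  have hVpos : 0 < b * Real.sin (t ^ 3) + t ^ 2 := Vpos b t hb0 hb1 (by linarith)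
  have hVlb := Vlb b t hb0 hb1 ht
  have hVub := Vub b t hb0 hb1 ht
  have hwpos : 0 < Real.sqrt (b * Real.sin (t ^ 3) + t ^ 2) := Real.sqrt_pos.2 hVpos
  have hw2 : Real.sqrt (b * Real.sin (t ^ 3) + t ^ 2) ^ 2 = b * Real.sin (t ^ 3) + t ^ 2 :=
    Real.sq_sqrt hVpos.le
  have hwu : Real.sqrt (b * Real.sin (t ^ 3) + t ^ 2) ≤ 3/2 * t := by
    have h1 : b * Real.sin (t ^ 3) + t ^ 2 ≤ (3/2 * t) ^ 2 := by nlinarith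
    calc Real.sqrt (b * Real.sin (t ^ 3) + t ^ 2) ≤ Real.sqrt ((3/2 * t) ^ 2) :=
          Real.sqrt_le_sqrt h1
      _ = 3/2 * t := Real.sqrt_sq (by positivity)
  have hwl : 7/10 * t ≤ Real.sqrt (b * Real.sin (t ^ 3) + t ^ 2) := by
    have h1 : (7/10 * t) ^ 2 ≤ b * Real.sin (t ^ 3) + t ^ 2 := by nlinarith
    calc (7/10 : ℝ) * t = Real.sqrt ((7/10 * t) ^ 2) := (Real.sqrt_sq (by positivity)).symm
      _ ≤ _ := Real.sqrt_le_sqrt h1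
  rw [deriv2_eq b t hb0 hb1 (by linarith)]
  have r1 : (b * Real.sin (t ^ 3) + t ^ 2) ^ (-(1:ℝ)/4) *
      (b * Real.sin (t ^ 3) + t ^ 2) ^ (-(9:ℝ)/4)
      = (Real.sqrt (b * Real.sin (t ^ 3) + t ^ 2) ^ 5)⁻¹ := by
    rw [← Real.rpow_add hVpos, show (-(1:ℝ)/4 + -(9:ℝ)/4) = -((5:ℕ):ℝ)/2 by norm_num,
      rpow_to_sqrt _ hVpos 5]
  have r2 : (b * Real.sin (t ^ 3) + t ^ 2) ^ (-(1:ℝ)/4) *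
      (b * Real.sin (t ^ 3) + t ^ 2) ^ (-(5:ℝ)/4)
      = (Real.sqrt (b * Real.sin (t ^ 3) + t ^ 2) ^ 3)⁻¹ := by
    rw [← Real.rpow_add hVpos, show (-(1:ℝ)/4 + -(5:ℝ)/4) = -((3:ℕ):ℝ)/2 by norm_num,
      rpow_to_sqrt _ hVpos 3]
  have key : (b * Real.sin (t ^ 3) + t ^ 2) ^ (-(1:ℝ)/4) *
      ((b * (Real.cos (t ^ 3) * (3 * t ^ 2)) + 2 * t) ^ 2 * (5/16) *
        (b * Real.sin (t ^ 3) + t ^ 2) ^ (-(9:ℝ)/4)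
      + (b * (-Real.sin (t ^ 3) * (3 * t ^ 2) * (3 * t ^ 2) + Real.cos (t ^ 3) * (6 * t)) + 2) *
        (-(1:ℝ)/4) * (b * Real.sin (t ^ 3) + t ^ 2) ^ (-(5:ℝ)/4)) -
      (9/4) * b * t * Real.sin (t ^ 3)
      = ((5/16) * (b * (Real.cos (t ^ 3) * (3 * t ^ 2)) + 2 * t) ^ 2) /
          Real.sqrt (b * Real.sin (t ^ 3) + t ^ 2) ^ 5
        + (-((6 * b * t * Real.cos (t ^ 3) + 2) / 4)) /
          Real.sqrt (b * Real.sin (t ^ 3) + t ^ 2) ^ 3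
        + ((9/4) * b * t * Real.sin (t ^ 3) *
            (t ^ 3 - Real.sqrt (b * Real.sin (t ^ 3) + t ^ 2) ^ 3)) /
          Real.sqrt (b * Real.sin (t ^ 3) + t ^ 2) ^ 3 := by
    have expand : (b * Real.sin (t ^ 3) + t ^ 2) ^ (-(1:ℝ)/4) *
        ((b * (Real.cos (t ^ 3) * (3 * t ^ 2)) + 2 * t) ^ 2 * (5/16) *
          (b * Real.sin (t ^ 3) + t ^ 2) ^ (-(9:ℝ)/4)
        + (b * (-Real.sin (t ^ 3) * (3 * t ^ 2) * (3 * t ^ 2) + Real.cos (t ^ 3) * (6 * t)) + 2) *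
          (-(1:ℝ)/4) * (b * Real.sin (t ^ 3) + t ^ 2) ^ (-(5:ℝ)/4))
        = (b * (Real.cos (t ^ 3) * (3 * t ^ 2)) + 2 * t) ^ 2 * (5/16) *
            ((b * Real.sin (t ^ 3) + t ^ 2) ^ (-(1:ℝ)/4) *
              (b * Real.sin (t ^ 3) + t ^ 2) ^ (-(9:ℝ)/4))
        + (b * (-Real.sin (t ^ 3) * (3 * t ^ 2) * (3 * t ^ 2) + Real.cos (t ^ 3) * (6 * t)) + 2) *
            (-(1:ℝ)/4) *
            ((b * Real.sin (t ^ 3) + t ^ 2) ^ (-(1:ℝ)/4) *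
              (b * Real.sin (t ^ 3) + t ^ 2) ^ (-(5:ℝ)/4)) := by ring
    rw [expand, r1, r2]
    field_simp
    ring
  rw [key]
  exact est_core b t (Real.sin (t ^ 3)) (Real.cos (t ^ 3))
    (Real.sqrt (b * Real.sin (t ^ 3) + t ^ 2)) hb0 hb1 ht
    (Real.neg_one_le_sin _) (Real.sin_le_one _) (Real.neg_one_le_cos _) (Real.cos_le_one _)
    hwpos hw2 hwl hwu


lemma hFd (t : ℝ) (ht : t ≠ 0) :
    HasDerivAt (fun u : ℝ => Real.sin (2 * u ^ 3) * (12 * u)⁻¹)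
      (t * Real.cos (2 * t ^ 3) / 2 - Real.sin (2 * t ^ 3) / (12 * t ^ 2)) t := by
  have h1 : HasDerivAt (fun u : ℝ => 2 * u ^ 3) (6 * t ^ 2) t := by
    exact ((hasDerivAt_pow 3 t).const_mul (2:ℝ)).congr_deriv (by push_cast; ring)
  have h2 : HasDerivAt (fun u : ℝ => Real.sin (2 * u ^ 3)) (Real.cos (2 * t ^ 3) * (6 * t ^ 2)) t :=
    h1.sin
  have h3 : HasDerivAt (fun u : ℝ => (12 * u)⁻¹) (-(12) / (12 * t) ^ 2) t := by
    have h4 : HasDerivAt (fun u : ℝ => 12 * u) (12:ℝ) t := by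
      simpa using (hasDerivAt_id t).const_mul (12:ℝ)
    exact h4.inv (by simpa using ht)
  exact (h2.mul h3).congr_deriv (by field_simp [ht]; ring)

lemma integral_tcos (T : ℝ) (hT : 1 ≤ T) :
    |∫ x in (1:ℝ)..T, x * Real.cos (2 * x ^ 3) / 2| ≤ 1/4 := by
  have hne : ∀ x ∈ uIcc (1:ℝ) T, x ≠ 0 := by
    intro x hx
    rw [uIcc_of_le hT] at hx
    have : (1:ℝ) ≤ x := hx.1
    positivity
  have hc1 : ContinuousOn (fun x : ℝ => x * Real.cos (2 * x ^ 3) / 2) (uIcc 1 T) := by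
    fun_prop
  have hc2 : ContinuousOn (fun x : ℝ => Real.sin (2 * x ^ 3) / (12 * x ^ 2)) (uIcc 1 T) := by
    apply ContinuousOn.div (by fun_prop) (by fun_prop)
    intro x hx
    have := hne x hx
    positivity
  have hcinv : ContinuousOn (fun x : ℝ => x⁻¹ * x⁻¹ / 12) (uIcc 1 T) := by
    have h := ContinuousOn.inv₀ (continuousOn_id : ContinuousOn (fun x:ℝ => x) (uIcc 1 T)) hne
    exact (h.mul h).div_const 12
  have hftc : ∫ x in (1:ℝ)..T,
      (x * Real.cos (2 * x ^ 3) / 2 - Real.sin (2 * x ^ 3) / (12 * x ^ 2))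
      = Real.sin (2 * T ^ 3) * (12 * T)⁻¹ - Real.sin (2 * 1 ^ 3) * (12 * 1)⁻¹ := by
    apply intervalIntegral.integral_eq_sub_of_hasDerivAt
    · intro x hx
      exact hFd x (hne x hx)
    · exact (hc1.sub hc2).intervalIntegrable
  have hsplit : ∫ x in (1:ℝ)..T,
      (x * Real.cos (2 * x ^ 3) / 2 - Real.sin (2 * x ^ 3) / (12 * x ^ 2))
      = (∫ x in (1:ℝ)..T, x * Real.cos (2 * x ^ 3) / 2)
        - ∫ x in (1:ℝ)..T, Real.sin (2 * x ^ 3) / (12 * x ^ 2) :=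
    intervalIntegral.integral_sub hc1.intervalIntegrable hc2.intervalIntegrable
  have hinvval : ∫ x in (1:ℝ)..T, x⁻¹ * x⁻¹ / 12 = -(T⁻¹ / 12) - (-((1:ℝ)⁻¹ / 12)) := by
    refine intervalIntegral.integral_eq_sub_of_hasDerivAt
      (f := fun x : ℝ => -(x⁻¹ / 12)) (fun x hx => ?_) hcinv.intervalIntegrable
    have hx0 := hne x hx
    exact ((hasDerivAt_inv hx0).div_const 12).neg.congr_deriv (by rw [sq, mul_inv]; ring)
  have hrem : |∫ x in (1:ℝ)..T, Real.sin (2 * x ^ 3) / (12 * x ^ 2)| ≤ 1/12 := by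
    have hb : ∀ x ∈ Icc (1:ℝ) T, |Real.sin (2 * x ^ 3) / (12 * x ^ 2)| ≤ x⁻¹ * x⁻¹ / 12 := by
      intro x hx
      have hx1 : (1:ℝ) ≤ x := hx.1
      have hx0 : (0:ℝ) < x := by linarith
      rw [abs_div, abs_of_pos (by positivity : (0:ℝ) < 12 * x ^ 2), div_le_iff₀ (by positivity)]
      have heq : x⁻¹ * x⁻¹ / 12 * (12 * x ^ 2) = 1 := by field_simp
      rw [heq]
      exact Real.abs_sin_le_one _
    have hT1 : (0:ℝ) < T := by linarith
    calc |∫ x in (1:ℝ)..T, Real.sin (2 * x ^ 3) / (12 * x ^ 2)|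
        ≤ ∫ x in (1:ℝ)..T, |Real.sin (2 * x ^ 3) / (12 * x ^ 2)| :=
          intervalIntegral.abs_integral_le_integral_abs hT
      _ ≤ ∫ x in (1:ℝ)..T, x⁻¹ * x⁻¹ / 12 :=
          intervalIntegral.integral_mono_on hT hc2.abs.intervalIntegrable
            hcinv.intervalIntegrable hb
      _ ≤ 1/12 := by
          rw [hinvval]
          have : 0 < T⁻¹ := by positivity
          norm_num
          linarith
  have hT0 : (0:ℝ) < T := by linarith
  have hFb : ∀ x : ℝ, 1 ≤ x → |Real.sin (2 * x ^ 3) * (12 * x)⁻¹| ≤ 1/12 := by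
    intro x hx1
    have hx0 : (0:ℝ) < x := by linarith
    rw [abs_mul, abs_of_pos (by positivity : (0:ℝ) < (12 * x)⁻¹)]
    have h1 := Real.abs_sin_le_one (2 * x ^ 3)
    have h2 : (12 * x)⁻¹ ≤ 1/12 := by
      rw [inv_le_comm₀ (by positivity) (by norm_num)]
      norm_num; linarith
    nlinarith [abs_nonneg (Real.sin (2 * x ^ 3)), inv_pos.2 (by positivity : (0:ℝ) < 12 * x)]
  have hb1 := hFb T hT
  have hb2 := hFb 1 le_rfl
  have : (∫ x in (1:ℝ)..T, x * Real.cos (2 * x ^ 3) / 2)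
      = (Real.sin (2 * T ^ 3) * (12 * T)⁻¹ - Real.sin (2 * 1 ^ 3) * (12 * 1)⁻¹)
        + ∫ x in (1:ℝ)..T, Real.sin (2 * x ^ 3) / (12 * x ^ 2) := by
    rw [← hftc, hsplit]; ring
  rw [this]
  calc |_ + _| ≤ |Real.sin (2 * T ^ 3) * (12 * T)⁻¹ - Real.sin (2 * 1 ^ 3) * (12 * 1)⁻¹|
      + |∫ x in (1:ℝ)..T, Real.sin (2 * x ^ 3) / (12 * x ^ 2)| := abs_add_le _ _
    _ ≤ 1/4 := by
      have := abs_sub (Real.sin (2 * T ^ 3) * (12 * T)⁻¹) (Real.sin (2 * 1 ^ 3) * (12 * 1)⁻¹)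
      linarith [abs_sub_abs_le_abs_sub (Real.sin (2 * T ^ 3) * (12 * T)⁻¹)
        (Real.sin (2 * 1 ^ 3) * (12 * 1)⁻¹), abs_sub_le (Real.sin (2 * T ^ 3) * (12 * T)⁻¹) 0
        (Real.sin (2 * 1 ^ 3) * (12 * 1)⁻¹)]

lemma integral_tsinsq (T : ℝ) (hT : 1 ≤ T) :
    (T ^ 2 - 1) / 4 - 1/4 ≤ ∫ x in (1:ℝ)..T, x * Real.sin (x ^ 3) ^ 2 := by
  have hcongr : ∀ x ∈ uIcc (1:ℝ) T,
      x * Real.sin (x ^ 3) ^ 2 = x / 2 - x * Real.cos (2 * x ^ 3) / 2 := by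
    intro x _
    rw [Real.sin_sq_eq_half_sub]
    ring
  have h1 : ∫ x in (1:ℝ)..T, x * Real.sin (x ^ 3) ^ 2
      = ∫ x in (1:ℝ)..T, (x / 2 - x * Real.cos (2 * x ^ 3) / 2) :=
    intervalIntegral.integral_congr hcongr
  have h2 : ∫ x in (1:ℝ)..T, (x / 2 - x * Real.cos (2 * x ^ 3) / 2)
      = (∫ x in (1:ℝ)..T, x / 2) - ∫ x in (1:ℝ)..T, x * Real.cos (2 * x ^ 3) / 2 :=
    intervalIntegral.integral_sub (by apply ContinuousOn.intervalIntegrable; fun_prop)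
      (by apply ContinuousOn.intervalIntegrable; fun_prop)
  have h3 : ∫ x in (1:ℝ)..T, x / 2 = (T ^ 2 - 1) / 4 := by
    have : ∫ x in (1:ℝ)..T, x / 2 = (∫ x in (1:ℝ)..T, x) / 2 :=
      intervalIntegral.integral_div 2 _
    rw [this, integral_id]
    ring
  have h4 := integral_tcos T hT
  rw [h1, h2, h3]
  have := abs_le.1 h4
  linarith [this.1, this.2]

lemma notint (b : ℝ) (hb0 : 0 < b) (hb1 : b ≤ 1)
    (φ : ℝ → ℝ)
    (hest : ∀ t : ℝ, 1 ≤ t → |φ t - (9/4) * b * t * Real.sin (t ^ 3)| ≤ 100 * t⁻¹)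
    (h : IntegrableOn φ (Ici 1) volume) : False := by
  set M := ∫ x in Ici (1:ℝ), |φ x| with hM_def
  have hMnn : 0 ≤ M := integral_nonneg fun x => abs_nonneg _
  have habs : IntegrableOn (fun x => |φ x|) (Ici (1:ℝ)) volume := h.abs
  have key : ∀ T : ℝ, 1 ≤ T → (9/4) * b * ((T ^ 2 - 1) / 4 - 1/4) ≤ M + 100 * T := by
    intro T hT
    -- pointwise bound on Icc 1 T
    have hpt : ∀ x ∈ Icc (1:ℝ) T, (9/4) * b * (x * Real.sin (x ^ 3) ^ 2)
        ≤ |φ x| + 100 * x⁻¹ := by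
      intro x hx
      have hx1 : (1:ℝ) ≤ x := hx.1
      have hx0 : (0:ℝ) < x := by linarith
      have h1 := hest x hx1
      have h2 : |(9/4) * b * x * Real.sin (x ^ 3)| ≤ |φ x| + 100 * x⁻¹ := by
        have := abs_sub_abs_le_abs_sub ((9/4) * b * x * Real.sin (x ^ 3)) (φ x)
        rw [abs_sub_comm] at this
        linarith
      have h3 : (9/4) * b * (x * Real.sin (x ^ 3) ^ 2) ≤ |(9/4) * b * x * Real.sin (x ^ 3)| := by
        rw [abs_mul, abs_of_pos (by positivity : (0:ℝ) < (9:ℝ)/4 * b * x)]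
        have hs1 : |Real.sin (x ^ 3)| ≤ 1 := Real.abs_sin_le_one _
        have hs2 : Real.sin (x ^ 3) ^ 2 ≤ |Real.sin (x ^ 3)| := by
          nlinarith [sq_abs (Real.sin (x ^ 3)), abs_nonneg (Real.sin (x ^ 3))]
        nlinarith [mul_le_mul_of_nonneg_left hs2 (by positivity : (0:ℝ) ≤ 9/4 * b * x)]
      linarith
    -- integrability of RHS on [1,T]
    have hφi : IntervalIntegrable (fun x => |φ x|) volume 1 T := by
      rw [intervalIntegrable_iff_integrableOn_Icc_of_le hT]
      exact habs.mono_set (Icc_subset_Ici_self)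
    have hinvi : IntervalIntegrable (fun x : ℝ => 100 * x⁻¹) volume 1 T := by
      apply ContinuousOn.intervalIntegrable
      apply ContinuousOn.mul continuousOn_const
      apply ContinuousOn.inv₀ continuousOn_id
      intro x hx
      rw [uIcc_of_le hT] at hx
      have : (1:ℝ) ≤ x := hx.1
      positivity
    have hint1 : ∫ x in (1:ℝ)..T, (9/4) * b * (x * Real.sin (x ^ 3) ^ 2)
        ≤ ∫ x in (1:ℝ)..T, (|φ x| + 100 * x⁻¹) := by
      apply intervalIntegral.integral_mono_on hT
        (by apply ContinuousOn.intervalIntegrable; fun_prop) (hφi.add hinvi) hpt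
    have hlhs : ∫ x in (1:ℝ)..T, (9/4) * b * (x * Real.sin (x ^ 3) ^ 2)
        = (9/4) * b * ∫ x in (1:ℝ)..T, x * Real.sin (x ^ 3) ^ 2 :=
      intervalIntegral.integral_const_mul _ _
    have hrhs : ∫ x in (1:ℝ)..T, (|φ x| + 100 * x⁻¹)
        = (∫ x in (1:ℝ)..T, |φ x|) + ∫ x in (1:ℝ)..T, 100 * x⁻¹ :=
      intervalIntegral.integral_add hφi hinvi
    have hφM : ∫ x in (1:ℝ)..T, |φ x| ≤ M := by
      rw [intervalIntegral.integral_of_le hT]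
      exact setIntegral_mono_set habs
        (Filter.Eventually.of_forall fun x => abs_nonneg _)
        (HasSubset.Subset.eventuallyLE (Ioc_subset_Ioi_self.trans Ioi_subset_Ici_self))
    have hlog : ∫ x in (1:ℝ)..T, 100 * x⁻¹ ≤ 100 * T := by
      rw [intervalIntegral.integral_const_mul, integral_inv_of_pos one_pos (by linarith),
        div_one]
      have := Real.log_le_sub_one_of_pos (show (0:ℝ) < T by linarith)
      linarith
    have hlow := integral_tsinsq T hT
    calc (9/4) * b * ((T ^ 2 - 1) / 4 - 1/4)
        ≤ (9/4) * b * ∫ x in (1:ℝ)..T, x * Real.sin (x ^ 3) ^ 2 := by nlinarith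
      _ = ∫ x in (1:ℝ)..T, (9/4) * b * (x * Real.sin (x ^ 3) ^ 2) := hlhs.symm
      _ ≤ ∫ x in (1:ℝ)..T, (|φ x| + 100 * x⁻¹) := hint1
      _ = (∫ x in (1:ℝ)..T, |φ x|) + ∫ x in (1:ℝ)..T, 100 * x⁻¹ := hrhs
      _ ≤ M + 100 * T := by linarith
  -- contradiction
  have final : ∀ S : ℝ, 1 ≤ S → b * S = 16/9 * M + 1600/9 + 3 * b → False := by
    intro S hS1 hbS_eq
    have hk2 : (9:ℝ)/16 * (b * S ^ 2) - (9/8) * b ≤ M + 100 * S := by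
      linear_combination (key S hS1)
    have e4 : (9:ℝ)/16 * (b * S ^ 2) = (M + 27/16 * b) * S + 100 * S := by
      rw [show b * S ^ 2 = (b * S) * S from by ring, hbS_eq]; ring
    have h6 : (M + 27/16 * b) * 1 ≤ (M + 27/16 * b) * S :=
      mul_le_mul_of_nonneg_left hS1 (by positivity)
    linarith
  have hbne : b ≠ 0 := hb0.ne'
  apply final ((16/9 * M + 1600/9 + 2 * b) / b + 1)
  · have : 0 ≤ (16/9 * M + 1600/9 + 2 * b) / b := by positivity
    linarith
  · field_simp
    ring


/-- The potential `V(t) = b sin(t³) + t²` with `b ∈ (0, 1]`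
is positive on `[1, ∞)`, its WKB error control function
`φ(t) = V(t)^{-1/4} (d²/dt²)(V(t)^{-1/4})` satisfies
`φ(t) = (9/4) b t sin(t³) + O(t⁻¹)` as `t → ∞`, and `φ` is not Lebesgue
integrable on `[1, ∞)`. -/
theorem stmt18 (b : ℝ) (hb : b ∈ Ioc (0 : ℝ) 1) :
    (∀ t : ℝ, 1 ≤ t → 0 < b * Real.sin (t ^ 3) + t ^ 2) ∧
    (∃ C : ℝ, ∀ t : ℝ, 1 ≤ t →
      |(b * Real.sin (t ^ 3) + t ^ 2) ^ (-(1 : ℝ)/4) *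
          deriv (deriv fun s : ℝ =>
            (b * Real.sin (s ^ 3) + s ^ 2) ^ (-(1 : ℝ)/4)) t -
        (9/4) * b * t * Real.sin (t ^ 3)| ≤ C * t⁻¹) ∧
    ¬ IntegrableOn
        (fun t : ℝ => (b * Real.sin (t ^ 3) + t ^ 2) ^ (-(1 : ℝ)/4) *
          deriv (deriv fun s : ℝ =>
            (b * Real.sin (s ^ 3) + s ^ 2) ^ (-(1 : ℝ)/4)) t)
        (Ici 1) volume := by
  obtain ⟨hb0, hb1⟩ := hb
  refine ⟨fun t ht => Vpos b t hb0 hb1 (by linarith),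
    ⟨100, fun t ht => est b t hb0 hb1 ht⟩, fun h => ?_⟩
  exact notint b hb0 hb1 _ (fun t ht => est b t hb0 hb1 ht) h
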